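/- Let x_1,...,x_k be distinct positive reals and let σ be a size-biased random permutation of [k], i.e. P(σ = (i_1,...,i_k)) = ∏_{j=1}^{k} x_{i_j}/(x_{i_j} + x_{i_{j+1}} + ... + x_{i_k}). For j ∈ [k] let A_j be the event that x_j precedes x_ℓ in the permuted sequence for every j < ℓ ≤ k. Then the events A_1,...,A_k are mutually independent, with P(A_j) = x_j/(x_j + x_{j+1} + ... + x_k). -/

import Mathlib

open Finset

private lemma image_Ici_succAbove {n : ℕ} (p : Fin (n+1)) (j₀ : Fin n)
    (h : p ≤ j₀.castSucc) :
    (Finset.Ici j₀).image p.succAbove = Finset.Ici (p.succAbove j₀) := by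
  have hj : p.succAbove j₀ = j₀.succ := Fin.succAbove_of_le_castSucc _ _ h
  ext ℓ
  simp only [Finset.mem_image, Finset.mem_Ici]
  constructor
  · rintro ⟨i, hi, rfl⟩
    exact Fin.succAbove_le_succAbove_iff.mpr hi
  · intro hℓ
    have hpℓ : ℓ ≠ p := by
      have h2 : p < ℓ := h.trans_lt ((Fin.castSucc_lt_succ : j₀.castSucc < j₀.succ).trans_le (hj ▸ hℓ))
      exact h2.ne'
    obtain ⟨i, rfl⟩ := Fin.exists_succAbove_eq hpℓ
    exact ⟨i, Fin.succAbove_le_succAbove_iff.mp hℓ, rfl⟩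

private lemma sum_Ici_succAbove {n : ℕ} (p : Fin (n+1)) (j₀ : Fin n)
    (h : p ≤ j₀.castSucc) (f : Fin (n+1) → ℝ) :
    ∑ ℓ ∈ Finset.Ici (p.succAbove j₀), f ℓ = ∑ ℓ₀ ∈ Finset.Ici j₀, f (p.succAbove ℓ₀) := by
  rw [← image_Ici_succAbove p j₀ h,
    Finset.sum_image (fun a _ b _ hab => Fin.succAbove_right_injective hab)]

private def Φ {n : ℕ} (p : Fin (n+1)) (e : Equiv.Perm (Fin n)) : Equiv.Perm (Fin (n+1)) :=
  ((finSuccEquiv n).trans (Equiv.optionCongr e)).trans (finSuccEquiv' p).symm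

private lemma Φ_zero {n : ℕ} (p : Fin (n+1)) (e : Equiv.Perm (Fin n)) : Φ p e 0 = p := by
  simp [Φ]

private lemma Φ_succ {n : ℕ} (p : Fin (n+1)) (e : Equiv.Perm (Fin n)) (i : Fin n) :
    Φ p e i.succ = p.succAbove (e i) := by
  simp [Φ]

private lemma Φ_symm_self {n : ℕ} (p : Fin (n+1)) (e : Equiv.Perm (Fin n)) :
    (Φ p e).symm p = 0 := by
  simp [Φ, finSuccEquiv'_at, ← Equiv.optionCongr_symm, Equiv.optionCongr_apply]

private lemma Φ_symm_succAbove {n : ℕ} (p : Fin (n+1)) (e : Equiv.Perm (Fin n)) (q : Fin n) :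
    (Φ p e).symm (p.succAbove q) = (e.symm q).succ := by
  simp [Φ, finSuccEquiv'_succAbove, ← Equiv.optionCongr_symm, Equiv.optionCongr_apply]

private lemma Φ_bijective {n : ℕ} :
    Function.Bijective (fun pe : Fin (n+1) × Equiv.Perm (Fin n) => Φ pe.1 pe.2) := by
  rw [Fintype.bijective_iff_injective_and_card]
  constructor
  · rintro ⟨p, e⟩ ⟨p', e'⟩ hpe
    simp only at hpe
    have hp : p = p' := by rw [← Φ_zero p e, ← Φ_zero p' e', hpe]
    subst hp
    have he : e = e' := Equiv.ext fun i => Fin.succAbove_right_injective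
      (by simpa only [Φ_succ] using
        congrArg (fun σ : Equiv.Perm (Fin (n+1)) => σ i.succ) hpe)
    rw [he]
  · simp [Fintype.card_perm, Nat.factorial_succ]

private lemma cond_iff {n : ℕ} (p : Fin (n+1)) (e : Equiv.Perm (Fin n)) (S : Finset (Fin (n+1))) :
    (∀ j ∈ S, ∀ ℓ : Fin (n+1), j < ℓ → (Φ p e).symm j < (Φ p e).symm ℓ) ↔
    ((∀ j ∈ S, p ≤ j) ∧
      ∀ j₀ : Fin n, p.succAbove j₀ ∈ S → ∀ ℓ₀ : Fin n, j₀ < ℓ₀ → e.symm j₀ < e.symm ℓ₀) := by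
  constructor
  · intro H
    refine ⟨fun j hj => ?_, fun j₀ hj₀ ℓ₀ hℓ => ?_⟩
    · by_contra hpj
      push_neg at hpj
      have h2 := H j hj p hpj
      rw [Φ_symm_self] at h2
      exact Fin.not_lt_zero _ h2
    · have h2 := H _ hj₀ (p.succAbove ℓ₀) (Fin.succAbove_lt_succAbove_iff.mpr hℓ)
      rw [Φ_symm_succAbove, Φ_symm_succAbove] at h2
      exact Fin.succ_lt_succ_iff.mp h2
  · rintro ⟨h1, h2⟩ j hj ℓ hjℓ
    rcases eq_or_ne j p with rfl | hne
    · rw [Φ_symm_self]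
      obtain ⟨ℓ₀, rfl⟩ := Fin.exists_succAbove_eq hjℓ.ne'
      rw [Φ_symm_succAbove]
      exact Fin.succ_pos _
    · have hpj : p < j := lt_of_le_of_ne (h1 j hj) (Ne.symm hne)
      obtain ⟨j₀, rfl⟩ := Fin.exists_succAbove_eq hne
      obtain ⟨ℓ₀, rfl⟩ := Fin.exists_succAbove_eq (hpj.trans hjℓ).ne'
      rw [Φ_symm_succAbove, Φ_symm_succAbove]
      exact Fin.succ_lt_succ_iff.mpr
        (h2 j₀ hj ℓ₀ (Fin.succAbove_lt_succAbove_iff.mp hjℓ))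

private lemma prod_Φ {n : ℕ} (x : Fin (n+1) → ℝ) (p : Fin (n+1)) (e : Equiv.Perm (Fin n)) :
    (∏ j : Fin (n+1), x (Φ p e j) / ∑ i ∈ Finset.Ici j, x (Φ p e i)) =
    (x p / ∑ i, x i) *
      ∏ j₀ : Fin n, x (p.succAbove (e j₀)) / ∑ i₀ ∈ Finset.Ici j₀, x (p.succAbove (e i₀)) := by
  rw [Fin.prod_univ_succ]
  congr 1
  · rw [Φ_zero]
    congr 1
    have h0 : Finset.Ici (0 : Fin (n+1)) = Finset.univ := by
      ext i; simp [Fin.zero_le]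
    rw [h0]
    exact Equiv.sum_comp (Φ p e) x
  · refine Finset.prod_congr rfl fun j₀ _ => ?_
    rw [Φ_succ]
    congr 1
    have h2 := sum_Ici_succAbove 0 j₀ (Fin.zero_le _) (fun i => x (Φ p e i))
    rw [Fin.succAbove_zero] at h2
    rw [h2]
    exact Finset.sum_congr rfl fun i₀ _ => by rw [Φ_succ]

private lemma ite_and_mul' {a b : Prop} [Decidable a] [Decidable b] (u v : ℝ) :
    (if a ∧ b then u * v else 0) = (if a then u else 0) * (if b then v else 0) := by
  by_cases ha : a <;> by_cases hb : b <;> simp [ha, hb]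

private lemma aux : ∀ (k : ℕ) (x : Fin k → ℝ), (∀ i, 0 < x i) → ∀ (S : Finset (Fin k)),
    (∑ σ ∈ Finset.univ.filter (fun σ : Equiv.Perm (Fin k) =>
        ∀ j ∈ S, ∀ ℓ : Fin k, j < ℓ → σ.symm j < σ.symm ℓ),
      ∏ j : Fin k, x (σ j) / ∑ i ∈ Finset.Ici j, x (σ i)) =
    ∏ j ∈ S, x j / ∑ ℓ ∈ Finset.Ici j, x ℓ := by
  intro k
  induction k with
  | zero =>
    intro x hx S
    have hS : S = ∅ := Finset.eq_empty_of_isEmpty S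
    subst hS
    simp
  | succ n ih =>
    intro x hx S
    have hT0 : (0 : ℝ) < ∑ i, x i :=
      Finset.sum_pos (fun i _ => hx i) Finset.univ_nonempty
    -- rewrite the sum over permutations as a sum over pairs (p, e)
    have hbij := Fintype.sum_bijective
      (fun pe : Fin (n+1) × Equiv.Perm (Fin n) => Φ pe.1 pe.2) Φ_bijective
      (fun pe => if (∀ j ∈ S, ∀ ℓ : Fin (n+1), j < ℓ →
            (Φ pe.1 pe.2).symm j < (Φ pe.1 pe.2).symm ℓ) then
          ∏ j : Fin (n+1), x (Φ pe.1 pe.2 j) / ∑ i ∈ Finset.Ici j, x (Φ pe.1 pe.2 i) else 0)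
      (fun σ => if (∀ j ∈ S, ∀ ℓ : Fin (n+1), j < ℓ → σ.symm j < σ.symm ℓ) then
          ∏ j : Fin (n+1), x (σ j) / ∑ i ∈ Finset.Ici j, x (σ i) else 0)
      (fun pe => rfl)
    rw [Finset.sum_filter, ← hbij, Fintype.sum_prod_type]
    -- rewrite each summand
    have hsummand : ∀ (p : Fin (n+1)) (e : Equiv.Perm (Fin n)),
        (if (∀ j ∈ S, ∀ ℓ : Fin (n+1), j < ℓ → (Φ p e).symm j < (Φ p e).symm ℓ) then
          ∏ j : Fin (n+1), x (Φ p e j) / ∑ i ∈ Finset.Ici j, x (Φ p e i) else 0)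
        = (if (∀ j ∈ S, p ≤ j) then x p / ∑ i, x i else 0) *
          (if (∀ j₀ : Fin n, p.succAbove j₀ ∈ S → ∀ ℓ₀ : Fin n, j₀ < ℓ₀ →
              e.symm j₀ < e.symm ℓ₀) then
            ∏ j₀ : Fin n, x (p.succAbove (e j₀)) /
              ∑ i₀ ∈ Finset.Ici j₀, x (p.succAbove (e i₀)) else 0) := by
      intro p e
      rw [if_congr (cond_iff p e S) (prod_Φ x p e) rfl, ite_and_mul']
    simp only [hsummand]
    -- pull out the p-factor and apply the induction hypothesis to the inner sum
    have hinner : ∀ p : Fin (n+1),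
        (∑ e : Equiv.Perm (Fin n), if (∀ j₀ : Fin n, p.succAbove j₀ ∈ S →
              ∀ ℓ₀ : Fin n, j₀ < ℓ₀ → e.symm j₀ < e.symm ℓ₀) then
            ∏ j₀ : Fin n, x (p.succAbove (e j₀)) /
              ∑ i₀ ∈ Finset.Ici j₀, x (p.succAbove (e i₀)) else 0)
        = ∏ j₀ ∈ Finset.univ.filter (fun j₀ : Fin n => p.succAbove j₀ ∈ S),
            x (p.succAbove j₀) / ∑ ℓ₀ ∈ Finset.Ici j₀, x (p.succAbove ℓ₀) := by
      intro p
      have := ih (fun i => x (p.succAbove i)) (fun i => hx _)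
        (Finset.univ.filter (fun j₀ : Fin n => p.succAbove j₀ ∈ S))
      rw [Finset.sum_filter] at this
      rw [← this]
      refine Finset.sum_congr rfl fun e _ => if_congr ?_ rfl rfl
      simp [Finset.mem_filter]
    simp only [← Finset.mul_sum, hinner]
    -- rewrite the per-p product when the condition holds
    have hprod : ∀ p : Fin (n+1), (∀ j ∈ S, p ≤ j) →
        (∏ j₀ ∈ Finset.univ.filter (fun j₀ : Fin n => p.succAbove j₀ ∈ S),
            x (p.succAbove j₀) / ∑ ℓ₀ ∈ Finset.Ici j₀, x (p.succAbove ℓ₀))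
        = ∏ j ∈ S.erase p, x j / ∑ ℓ ∈ Finset.Ici j, x ℓ := by
      intro p hp
      have himg : (Finset.univ.filter (fun j₀ : Fin n => p.succAbove j₀ ∈ S)).image
          p.succAbove = S.erase p := by
        ext j
        simp only [Finset.mem_image, Finset.mem_erase, Finset.mem_filter, Finset.mem_univ,
          true_and]
        constructor
        · rintro ⟨j₀, hj₀, rfl⟩; exact ⟨Fin.succAbove_ne p j₀, hj₀⟩
        · rintro ⟨hne, hj⟩
          obtain ⟨j₀, rfl⟩ := Fin.exists_succAbove_eq hne
          exact ⟨j₀, hj, rfl⟩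
      rw [← himg, Finset.prod_image (fun a _ b _ hab => Fin.succAbove_right_injective hab)]
      refine Finset.prod_congr rfl fun j₀ hj₀ => ?_
      have hjS : p.succAbove j₀ ∈ S := (Finset.mem_filter.mp hj₀).2
      have hple : p ≤ j₀.castSucc := by
        by_contra hc
        push_neg at hc
        have h3 := hp _ hjS
        rw [Fin.succAbove_of_castSucc_lt p j₀ hc] at h3
        exact absurd h3 (not_le.mpr hc)
      rw [sum_Ici_succAbove p j₀ hple x]
    have hterm : ∀ p : Fin (n+1),
        (if (∀ j ∈ S, p ≤ j) then x p / ∑ i, x i else 0) *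
          (∏ j₀ ∈ Finset.univ.filter (fun j₀ : Fin n => p.succAbove j₀ ∈ S),
            x (p.succAbove j₀) / ∑ ℓ₀ ∈ Finset.Ici j₀, x (p.succAbove ℓ₀))
        = if (∀ j ∈ S, p ≤ j) then
            (x p / ∑ i, x i) * ∏ j ∈ S.erase p, x j / ∑ ℓ ∈ Finset.Ici j, x ℓ else 0 := by
      intro p
      by_cases hA : ∀ j ∈ S, p ≤ j
      · rw [if_pos hA, if_pos hA, hprod p hA]
      · rw [if_neg hA, if_neg hA, zero_mul]
    simp only [hterm]
    -- final computation
    rcases Finset.eq_empty_or_nonempty S with rfl | hS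
    · simp only [Finset.notMem_empty, false_implies, implies_true, if_true,
        Finset.erase_empty, Finset.prod_empty, mul_one]
      rw [← Finset.sum_div]
      exact div_self (ne_of_gt hT0)
    · obtain ⟨m, hm⟩ : ∃ m, m = S.min' hS := ⟨_, rfl⟩
      have hmS : m ∈ S := hm ▸ S.min'_mem hS
      have hmle : ∀ j ∈ S, m ≤ j := fun j hj => hm ▸ S.min'_le j hj
      have hAiff : ∀ p : Fin (n+1), (∀ j ∈ S, p ≤ j) ↔ p ≤ m :=
        fun p => ⟨fun h => h m hmS, fun h j hj => h.trans (hmle j hj)⟩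
      simp only [hAiff]
      have hfil : Finset.univ.filter (fun p : Fin (n+1) => p ≤ m) = Finset.Iic m := by
        ext q; simp
      rw [← Finset.sum_filter, hfil, ← Finset.Iio_insert, Finset.sum_insert (by simp)]
      have hIio : ∀ p ∈ Finset.Iio m,
          (x p / ∑ i, x i) * ∏ j ∈ S.erase p, x j / ∑ ℓ ∈ Finset.Ici j, x ℓ
          = (x p / ∑ i, x i) * ((x m / ∑ ℓ ∈ Finset.Ici m, x ℓ) *
              ∏ j ∈ S.erase m, x j / ∑ ℓ ∈ Finset.Ici j, x ℓ) := by
        intro p hp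
        rw [Finset.erase_eq_of_notMem
          (fun hpS => absurd (hmle p hpS) (not_le.mpr (Finset.mem_Iio.mp hp))),
          ← Finset.mul_prod_erase S _ hmS]
      rw [Finset.sum_congr rfl hIio, ← Finset.mul_prod_erase S _ hmS,
        ← Finset.sum_mul, ← Finset.sum_div]
      have hR0 : (0:ℝ) < ∑ ℓ ∈ Finset.Ici m, x ℓ :=
        Finset.sum_pos (fun i _ => hx i) ⟨m, Finset.mem_Ici.mpr le_rfl⟩
      have hU0 : (0:ℝ) ≤ ∑ p ∈ Finset.Iio m, x p :=
        Finset.sum_nonneg fun i _ => (hx i).le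
      have hdisj : Disjoint (Finset.Iio m) (Finset.Ici m) := by
        simp only [Finset.disjoint_left, Finset.mem_Iio, Finset.mem_Ici]
        intro a ha
        exact not_le.mpr ha
      have hUnion : Finset.Iio m ∪ Finset.Ici m = Finset.univ := by
        ext q; simp [lt_or_ge]
      have hTUR : (∑ i, x i) = (∑ p ∈ Finset.Iio m, x p) + ∑ ℓ ∈ Finset.Ici m, x ℓ := by
        rw [← Finset.sum_union hdisj, hUnion]
      rw [hTUR]
      have h2 : (∑ ℓ ∈ Finset.Ici m, x ℓ) ≠ 0 := hR0.ne'
      have h1 : (∑ p ∈ Finset.Iio m, x p) + (∑ ℓ ∈ Finset.Ici m, x ℓ) ≠ 0 :=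
        (add_pos_of_nonneg_of_pos hU0 hR0).ne'
      generalize (∏ j ∈ S.erase m, x j / ∑ ℓ ∈ Finset.Ici j, x ℓ) = P
      field_simp
      ring

/-- For a size-biased random permutation of distinct positive reals `x_1,…,x_k`
(the permutation `σ`, putting `x_{σ(1)},…,x_{σ(k)}` in a row, has probability
`∏_j x_{σ(j)}/(x_{σ(j)} + ⋯ + x_{σ(k)})`), the events
`A_j = {x_j precedes x_ℓ for all ℓ > j}` are mutually independent with
`P(A_j) = x_j/(x_j + x_{j+1} + ⋯ + x_k)`.  Mutual independence together with the
individual probabilities is expressed by the product formula over every subset `S`. -/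
theorem sizeBiased_records_independent (k : ℕ) (x : Fin k → ℝ)
    (hx : ∀ i, 0 < x i) (hdist : Function.Injective x) (S : Finset (Fin k)) :
    ∑ σ ∈ Finset.univ.filter (fun σ : Equiv.Perm (Fin k) =>
        ∀ j ∈ S, ∀ ℓ : Fin k, j < ℓ → σ.symm j < σ.symm ℓ),
      ∏ j : Fin k, x (σ j) / ∑ i ∈ Finset.Ici j, x (σ i) =
    ∏ j ∈ S, x j / ∑ ℓ ∈ Finset.Ici j, x ℓ :=
  aux k x hx S
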